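/- (Homogenizing force of performativity: variance decreases in platform susceptibility.) Suppose G is d-regular (so W = A/d is symmetric), α_i ≡ α ∈ (0,1) for all i, and x* is not a constant vector (Var(x*) > 0). For β ∈ (0,1) let x_PS(β) = (1 − β)(I − βΨ_∞)^{−1} Ψ_∞ x* (well-defined since ρ(βΨ_∞) < 1). Then the function β ↦ Var(x_PS(β)) is differentiable on (0,1) and its derivative is strictly negative at every β ∈ (0,1). -/

import Mathlib

open Matrix Filter Topology

/-- Row-normalized adjacency matrix `W = deg⁻¹ A` of a simple graph. -/
noncomputable def rowNormAdj {n : ℕ} (G : SimpleGraph (Fin n)) [DecidableRel G.Adj] :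
    Matrix (Fin n) (Fin n) ℝ :=
  Matrix.of fun i j => (G.adjMatrix ℝ) i j / (G.degree i : ℝ)

/-- The multi-step influence matrix
`Ψ_K = Σ_{k=0}^{K−1} (Λ_α W)^k (I − Λ_α) + (Λ_α W)^K`. -/
noncomputable def Psi {n : ℕ} (K : ℕ) (α : Fin n → ℝ) (W : Matrix (Fin n) (Fin n) ℝ) :
    Matrix (Fin n) (Fin n) ℝ :=
  (∑ k ∈ Finset.range K, (Matrix.diagonal α * W) ^ k * (1 - Matrix.diagonal α))
    + (Matrix.diagonal α * W) ^ K
/-- The infinite-horizon influence matrix `Ψ_∞ = Σ_{k=0}^∞ (Λ_α W)^k (I − Λ_α)`. -/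
noncomputable def PsiInf {n : ℕ} (α : Fin n → ℝ) (W : Matrix (Fin n) (Fin n) ℝ) :
    Matrix (Fin n) (Fin n) ℝ :=
  ∑' k : ℕ, (Matrix.diagonal α * W) ^ k * (1 - Matrix.diagonal α)

/-- `Mean(x) = (1/n) Σ_i x_i`. -/
noncomputable def meanV {n : ℕ} (x : Fin n → ℝ) : ℝ := (∑ i, x i) / n

/-- `Var(x) = Σ_i (x_i − Mean(x))²`. -/
noncomputable def varV {n : ℕ} (x : Fin n → ℝ) : ℝ := ∑ i, (x i - meanV x) ^ 2

namespace VDP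

open Finset

variable {n : ℕ}

/-- Sup-norm contraction property for a matrix. -/
def SupContr (S : Matrix (Fin n) (Fin n) ℝ) : Prop :=
  ∀ (v : Fin n → ℝ) (M : ℝ), (∀ j, |v j| ≤ M) → ∀ i, |(S *ᵥ v) i| ≤ M

lemma supContr_of_stochastic {S : Matrix (Fin n) (Fin n) ℝ}
    (h0 : ∀ i j, 0 ≤ S i j) (h1 : ∀ i, ∑ j, S i j = 1) : SupContr S := by
  intro v M hv i
  have : (S *ᵥ v) i = ∑ j, S i j * v j := rfl
  rw [this]
  calc |∑ j, S i j * v j| ≤ ∑ j, |S i j * v j| := Finset.abs_sum_le_sum_abs _ _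
    _ ≤ ∑ j, S i j * M := by
        refine Finset.sum_le_sum fun j _ => ?_
        rw [abs_mul, abs_of_nonneg (h0 i j)]
        exact mul_le_mul_of_nonneg_left (hv j) (h0 i j)
    _ = M := by rw [← Finset.sum_mul, h1, one_mul]

lemma isUnit_one_sub {S : Matrix (Fin n) (Fin n) ℝ} (hS : SupContr S) {c : ℝ}
    (hc : |c| < 1) : IsUnit (1 - c • S) := by
  rw [← Matrix.mulVec_injective_iff_isUnit]
  have hker : ∀ v : Fin n → ℝ, (1 - c • S) *ᵥ v = 0 → v = 0 := by
    intro v hv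
    rcases isEmpty_or_nonempty (Fin n) with he | hne
    · exact funext fun j => (he.false j).elim
    have hvS : v = c • (S *ᵥ v) := by
      rw [Matrix.sub_mulVec, Matrix.one_mulVec, Matrix.smul_mulVec] at hv
      exact (sub_eq_zero.mp hv)
    obtain ⟨i0, -, hmax⟩ := Finset.exists_max_image Finset.univ (fun i => |v i|) univ_nonempty
    have hb : |v i0| ≤ |c| * |v i0| := by
      have h2 : |(S *ᵥ v) i0| ≤ |v i0| := hS v _ (fun j => hmax j (Finset.mem_univ j)) i0
      calc |v i0| = |c| * |(S *ᵥ v) i0| := by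
            conv_lhs => rw [hvS]
            simp [abs_mul]
        _ ≤ |c| * |v i0| := mul_le_mul_of_nonneg_left h2 (abs_nonneg c)
    have h0 : |v i0| = 0 := by nlinarith [abs_nonneg (v i0)]
    funext j
    have := hmax j (Finset.mem_univ j)
    have : |v j| ≤ 0 := by rw [h0] at this; exact this
    simpa using le_antisymm this (abs_nonneg _)
  intro x y hxy
  have h : (1 - c • S) *ᵥ (x - y) = 0 := by
    rw [Matrix.mulVec_sub, hxy, sub_self]
  have := hker _ h
  exact sub_eq_zero.mp this

lemma inv_mulVec_eigen {A : Matrix (Fin n) (Fin n) ℝ} (hA : IsUnit A)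
    {v : Fin n → ℝ} {c : ℝ} (hc : c ≠ 0) (h : A *ᵥ v = c • v) :
    A⁻¹ *ᵥ v = c⁻¹ • v := by
  have h2 : A⁻¹ *ᵥ (A *ᵥ v) = v := by
    rw [Matrix.mulVec_mulVec, Matrix.nonsing_inv_mul A ((Matrix.isUnit_iff_isUnit_det A).mp hA),
      Matrix.one_mulVec]
  rw [h, Matrix.mulVec_smul] at h2
  calc A⁻¹ *ᵥ v = c⁻¹ • (c • (A⁻¹ *ᵥ v)) := by rw [smul_smul, inv_mul_cancel₀ hc, one_smul]
    _ = c⁻¹ • v := by rw [h2]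

lemma perron {G : SimpleGraph (Fin n)} [DecidableRel G.Adj] (hG : G.Connected)
    {S : Matrix (Fin n) (Fin n) ℝ} (h0 : ∀ i j, 0 ≤ S i j) (h1 : ∀ i, ∑ j, S i j = 1)
    (hpos : ∀ i j, G.Adj i j → 0 < S i j) {v : Fin n → ℝ} (hv : S *ᵥ v = v) :
    ∀ i j, v i = v j := by
  suffices key : ∀ i0, (∀ j, v j ≤ v i0) → ∀ j, v j = v i0 by
    intro i j
    have hne : Nonempty (Fin n) := ⟨i⟩
    obtain ⟨i0, -, hmax⟩ := Finset.exists_max_image Finset.univ v univ_nonempty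
    rw [key i0 (fun j => hmax j (Finset.mem_univ j)) i,
      key i0 (fun j => hmax j (Finset.mem_univ j)) j]
  intro i0 hmax
  have step : ∀ a b, v a = v i0 → G.Adj a b → v b = v i0 := by
    intro a b ha hab
    have hva : ∑ j, S a j * v j = v a := congrFun hv a
    have hrow : ∑ j, S a j * (v i0 - v j) = 0 := by
      have : ∑ j, S a j * (v i0 - v j) = (∑ j, S a j) * v i0 - ∑ j, S a j * v j := by
        rw [Finset.sum_mul, ← Finset.sum_sub_distrib]
        exact Finset.sum_congr rfl fun j _ => by ring
      rw [this, h1, one_mul, hva, ha, sub_self]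
    have hz := (Finset.sum_eq_zero_iff_of_nonneg (fun j _ =>
      mul_nonneg (h0 a j) (sub_nonneg.mpr (hmax j)))).mp hrow b (Finset.mem_univ b)
    have hSab := hpos a b hab
    rcases mul_eq_zero.mp hz with h | h
    · exact absurd h (ne_of_gt hSab)
    · linarith [sub_eq_zero.mp h]
  have walkind : ∀ {a b : Fin n}, G.Walk a b → v a = v i0 → v b = v i0 := by
    intro a b p
    induction p with
    | nil => exact id
    | cons h p ih => exact fun ha => ih (step _ _ ha h)
  exact fun j => walkind (hG.preconnected i0 j).some rfl

lemma pow_stochastic {S : Matrix (Fin n) (Fin n) ℝ}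
    (h0 : ∀ i j, 0 ≤ S i j) (h1 : ∀ i, ∑ j, S i j = 1) (k : ℕ) :
    (∀ i j, 0 ≤ (S ^ k) i j) ∧ (∀ i, ∑ j, (S ^ k) i j = 1) := by
  induction k with
  | zero =>
    constructor
    · intro i j; simp [Matrix.one_apply]; positivity
    · intro i; simp [Matrix.one_apply]
  | succ k ih =>
    rw [pow_succ]
    constructor
    · intro i j
      rw [Matrix.mul_apply]
      exact Finset.sum_nonneg fun l _ => mul_nonneg (ih.1 i l) (h0 l j)
    · intro i
      simp_rw [Matrix.mul_apply]
      rw [Finset.sum_comm]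
      calc ∑ l, ∑ j, (S ^ k) i l * S l j = ∑ l, (S ^ k) i l * ∑ j, S l j := by
            simp_rw [Finset.mul_sum]
        _ = 1 := by simp_rw [h1]; simpa using ih.2 i

lemma psiInf_eq {W : Matrix (Fin n) (Fin n) ℝ} {α : ℝ} (hα0 : 0 < α) (hα1 : α < 1)
    (h0 : ∀ i j, 0 ≤ W i j) (h1 : ∀ i, ∑ j, W i j = 1)
    (hUnit : IsUnit (1 - α • W)) :
    (∑' k : ℕ, (Matrix.diagonal (fun _ : Fin n => α) * W) ^ k
      * (1 - Matrix.diagonal (fun _ : Fin n => α)))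
      = (1 - α) • (1 - α • W)⁻¹ := by
  set T : Matrix (Fin n) (Fin n) ℝ := α • W with hT
  set B : Matrix (Fin n) (Fin n) ℝ := (1 - T)⁻¹ with hB
  have hBmul : (1 - T) * B = 1 :=
    Matrix.mul_nonsing_inv _ ((Matrix.isUnit_iff_isUnit_det _).mp hUnit)
  have hg : ∀ k : ℕ, (Matrix.diagonal (fun _ : Fin n => α) * W) ^ k
      * (1 - Matrix.diagonal (fun _ : Fin n => α)) = (1 - α) • T ^ k := by
    intro k
    rw [← Matrix.smul_one_eq_diagonal, Matrix.smul_mul, Matrix.one_mul]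
    have h2 : (1 : Matrix (Fin n) (Fin n) ℝ) - α • 1 = (1 - α) • 1 := by
      rw [sub_smul, one_smul]
    rw [h2, Matrix.mul_smul, Matrix.mul_one]
  have hWk := fun k => pow_stochastic h0 h1 k
  have hTk_bound : ∀ (k : ℕ) i j, |(T ^ k) i j| ≤ α ^ k := by
    intro k i j
    rw [hT, smul_pow, Matrix.smul_apply, smul_eq_mul, abs_mul, abs_pow,
      abs_of_pos hα0, abs_of_nonneg ((hWk k).1 i j)]
    have hle1 : (W ^ k) i j ≤ 1 := by
      have := Finset.single_le_sum (f := fun l => (W ^ k) i l)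
        (fun l _ => (hWk k).1 i l) (Finset.mem_univ j)
      rw [(hWk k).2 i] at this
      exact this
    nlinarith [pow_pos hα0 k, pow_nonneg hα0.le k]
  have hsummable : Summable (fun k : ℕ => (1 - α) • T ^ k) := by
    refine Pi.summable.mpr fun i => Pi.summable.mpr fun j => ?_
    refine Summable.of_norm_bounded
      ((summable_geometric_of_lt_one hα0.le hα1).mul_left (1 - α)) fun k => ?_
    have : ((1 - α) • T ^ k) i j = (1 - α) * (T ^ k) i j := rfl
    rw [Real.norm_eq_abs, this, abs_mul, abs_of_nonneg (by linarith : (0:ℝ) ≤ 1 - α)]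
    exact mul_le_mul_of_nonneg_left (hTk_bound k i j) (by linarith)
  have hgeo : ∀ m : ℕ, ∑ k ∈ Finset.range m, T ^ k = (1 - T ^ m) * B := by
    intro m
    have h2 : (∑ i ∈ Finset.range m, T ^ i) * (1 - T) = 1 - T ^ m := by
      rw [← neg_sub T 1, mul_neg, geom_sum_mul, neg_sub]
    calc ∑ k ∈ Finset.range m, T ^ k
        = ((∑ k ∈ Finset.range m, T ^ k) * (1 - T)) * B := by
          rw [Matrix.mul_assoc, hBmul, Matrix.mul_one]
      _ = (1 - T ^ m) * B := by rw [h2]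
  have hT0 : Tendsto (fun m : ℕ => T ^ m) atTop (𝓝 0) := by
    apply tendsto_pi_nhds.mpr; intro i
    rw [tendsto_pi_nhds]; intro j
    have : Tendsto (fun m : ℕ => α ^ m) atTop (𝓝 0) :=
      tendsto_pow_atTop_nhds_zero_of_lt_one hα0.le hα1
    exact squeeze_zero_norm (fun m => hTk_bound m i j) this
  have hpartial : Tendsto (fun m => ∑ k ∈ Finset.range m, (1 - α) • T ^ k) atTop
      (𝓝 ((1 - α) • B)) := by
    have heq : ∀ m, ∑ k ∈ Finset.range m, (1 - α) • T ^ k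
        = (1 - α) • ((1 - T ^ m) * B) := by
      intro m; rw [← Finset.smul_sum, hgeo]
    rw [funext heq]
    have hmul : Tendsto (fun m : ℕ => (1 - T ^ m) * B) atTop (𝓝 B) := by
      have h3 : Tendsto (fun m : ℕ => (1 : Matrix (Fin n) (Fin n) ℝ) - T ^ m) atTop
          (𝓝 1) := by simpa using tendsto_const_nhds.sub hT0
      have := h3.mul (tendsto_const_nhds (x := B))
      simpa using this
    exact hmul.const_smul _
  have htsum : (∑' k : ℕ, (1 - α) • T ^ k) = (1 - α) • B :=
    tendsto_nhds_unique (hsummable.hasSum.tendsto_sum_nat) hpartial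
  rw [tsum_congr hg, htsum]

lemma parseval (b : OrthonormalBasis (Fin n) ℝ (EuclideanSpace ℝ (Fin n)))
    (v : Fin n → Fin n → ℝ) (hv : ∀ j k, v j k = b j k)
    (w : Fin n → ℝ) : ∑ i, (∑ j, w j * v j i) ^ 2 = ∑ j, (w j) ^ 2 := by
  simp_rw [hv]
  set z : EuclideanSpace ℝ (Fin n) := ∑ j, w j • b j with hz
  have hz_apply : ∀ i, z i = ∑ j, w j * b j i := by
    intro i; rw [hz, WithLp.ofLp_sum, Finset.sum_apply]; simp
  have hrepr : ∀ k, b.repr z k = w k := by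
    intro k
    rw [hz, map_sum]
    simp_rw [_root_.map_smul, OrthonormalBasis.repr_self]
    rw [WithLp.ofLp_sum, Finset.sum_apply]
    simp [EuclideanSpace.single_apply]
  have h1 : ∑ i, (z i) ^ 2 = ‖z‖ ^ 2 := by
    rw [EuclideanSpace.norm_eq, Real.sq_sqrt (Finset.sum_nonneg fun i _ => sq_nonneg _)]
    simp [sq_abs]
  have h2 : ∑ k, (b.repr z k) ^ 2 = ‖b.repr z‖ ^ 2 := by
    rw [EuclideanSpace.norm_eq, Real.sq_sqrt (Finset.sum_nonneg fun i _ => sq_nonneg _)]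
    simp [sq_abs]
  calc ∑ i, (∑ j, w j * b j i) ^ 2 = ∑ i, (z i) ^ 2 := by simp_rw [hz_apply]
    _ = ‖z‖ ^ 2 := h1
    _ = ‖b.repr z‖ ^ 2 := by rw [b.repr.norm_map z]
    _ = ∑ k, (b.repr z k) ^ 2 := h2.symm
    _ = ∑ k, (w k) ^ 2 := by simp_rw [hrepr]

end VDP

open VDP Finset

set_option maxHeartbeats 3200000

/-- homogenizing force of performativity.  On a `d`-regular graph
with homogeneous `α ∈ (0,1)` and nonconstant `x*`, the variance of the stable
point `x_PS(β) = (1 − β)(I − βΨ_∞)⁻¹ Ψ_∞ x*` is differentiable in `β` on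
`(0,1)` with strictly negative derivative. -/
theorem variance_decreasing_in_platform_susceptibility {n : ℕ} (hn : 2 ≤ n)
    (G : SimpleGraph (Fin n)) [DecidableRel G.Adj] (hG : G.Connected)
    (d : ℕ) (hd : 0 < d) (hreg : ∀ i, G.degree i = d)
    (α : ℝ) (hα : α ∈ Set.Ioo (0 : ℝ) 1)
    (xstar : Fin n → ℝ) (hx : ∀ i, xstar i ∈ Set.Icc (0 : ℝ) 1)
    (hvar : 0 < varV xstar) :
    let P := PsiInf (fun _ => α) (rowNormAdj G)
    let xPS : ℝ → Fin n → ℝ := fun β => (1 - β) • (((1 - β • P)⁻¹ * P) *ᵥ xstar)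
    (∀ β ∈ Set.Ioo (0 : ℝ) 1, IsUnit (1 - β • P)) ∧
    (∀ β ∈ Set.Ioo (0 : ℝ) 1, DifferentiableAt ℝ (fun b => varV (xPS b)) β) ∧
    (∀ β ∈ Set.Ioo (0 : ℝ) 1, deriv (fun b => varV (xPS b)) β < 0) := by
  obtain ⟨hα0, hα1⟩ := hα
  have hne : Nonempty (Fin n) := ⟨⟨0, by omega⟩⟩
  have hn0 : (0 : ℝ) < (n : ℝ) := by exact_mod_cast (by omega : 0 < n)
  have hd0 : (0 : ℝ) < (d : ℝ) := by exact_mod_cast hd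
  intro P xPS
  set W := rowNormAdj G with hWdef
  -- basic facts about W
  have hWentry : ∀ i j, W i j = (if G.Adj i j then (1 : ℝ) else 0) / d := by
    intro i j
    simp [hWdef, rowNormAdj, SimpleGraph.adjMatrix_apply, hreg i]
  have hW0 : ∀ i j, 0 ≤ W i j := by
    intro i j; rw [hWentry]; positivity
  have hWpos : ∀ i j, G.Adj i j → 0 < W i j := by
    intro i j h; rw [hWentry]; simp [h]; positivity
  have hWrow : ∀ i, ∑ j, W i j = 1 := by
    intro i
    simp_rw [hWentry]
    rw [← Finset.sum_div, Finset.sum_boole]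
    have hfil : (Finset.univ.filter fun j => G.Adj i j) = G.neighborFinset i := by
      ext k; simp [SimpleGraph.mem_neighborFinset]
    rw [hfil, SimpleGraph.card_neighborFinset_eq_degree, hreg i]
    field_simp
  have hWs : ∀ i j, W i j = W j i := by
    intro i j
    rw [hWentry, hWentry]
    congr 1
    simp [G.adj_comm]
  have hWherm : W.IsHermitian := by
    ext i j
    simp only [Matrix.conjTranspose_apply, star_trivial]
    exact (hWs i j).symm
  have hWcontr : SupContr W := supContr_of_stochastic hW0 hWrow
  have hUnitT : IsUnit (1 - α • W) := isUnit_one_sub hWcontr (by rwa [abs_of_pos hα0])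
  set B := (1 - α • W)⁻¹ with hBdef
  have hBmul : (1 - α • W) * B = 1 :=
    Matrix.mul_nonsing_inv _ ((Matrix.isUnit_iff_isUnit_det _).mp hUnitT)
  have hP : P = (1 - α) • B := by
    show PsiInf (fun _ => α) (rowNormAdj G) = (1 - α) • B
    unfold PsiInf
    exact psiInf_eq hα0 hα1 hW0 hWrow hUnitT
  clear_value P
  -- sup contraction for P
  have hPcontr : SupContr P := by
    rw [hP]
    intro v M hv i
    set u := B *ᵥ v with hu
    have h2 : (1 - α • W) *ᵥ u = v := by
      rw [hu, Matrix.mulVec_mulVec, hBmul, Matrix.one_mulVec]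
    have huv : ∀ i2, u i2 = v i2 + α * (W *ᵥ u) i2 := by
      intro i2
      have h3 := congrFun h2 i2
      rw [Matrix.sub_mulVec, Matrix.one_mulVec, Matrix.smul_mulVec] at h3
      have h4 : u i2 - α * (W *ᵥ u) i2 = v i2 := h3
      linarith
    have hM0 : 0 ≤ M := le_trans (abs_nonneg _) (hv hne.some)
    obtain ⟨i0, -, hmax⟩ := Finset.exists_max_image Finset.univ (fun i => |u i|) univ_nonempty
    have hWu : |(W *ᵥ u) i0| ≤ |u i0| := hWcontr u _ (fun j => hmax j (Finset.mem_univ j)) i0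
    have hui0 : (1 - α) * |u i0| ≤ M := by
      have hb : |u i0| ≤ |v i0| + α * |u i0| := by
        calc |u i0| = |v i0 + α * (W *ᵥ u) i0| := by rw [huv i0]
          _ ≤ |v i0| + |α * (W *ᵥ u) i0| := abs_add_le _ _
          _ ≤ |v i0| + α * |u i0| := by
              rw [abs_mul, abs_of_pos hα0]
              nlinarith
      nlinarith [hv i0]
    have h5 : (((1 - α) • B) *ᵥ v) i = (1 - α) * u i := by
      rw [Matrix.smul_mulVec, ← hu]; rfl
    rw [h5, abs_mul, abs_of_nonneg (by linarith : (0:ℝ) ≤ 1 - α)]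
    calc (1 - α) * |u i| ≤ (1 - α) * |u i0| :=
          mul_le_mul_of_nonneg_left (hmax i (Finset.mem_univ i)) (by linarith)
      _ ≤ M := hui0
  have hUnit2 : ∀ β ∈ Set.Ioo (0 : ℝ) 1, IsUnit (1 - β • P) := by
    intro β hβ
    exact isUnit_one_sub hPcontr (by rw [abs_of_pos hβ.1]; exact hβ.2)
  -- the constant vector
  set e1 : Fin n → ℝ := fun _ => 1 with he1
  have hWone : W *ᵥ e1 = e1 := by
    funext i
    have : (W *ᵥ e1) i = ∑ j, W i j * 1 := rfl
    rw [this]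
    simp [hWrow i, he1]
  have hone_ne : (1 : ℝ) - α ≠ 0 := by linarith
  have hTone : (1 - α • W) *ᵥ e1 = (1 - α) • e1 := by
    rw [Matrix.sub_mulVec, Matrix.one_mulVec, Matrix.smul_mulVec, hWone,
      sub_smul, one_smul]
  have hBone : B *ᵥ e1 = (1 - α)⁻¹ • e1 := inv_mulVec_eigen hUnitT hone_ne hTone
  have hPone : P *ᵥ e1 = e1 := by
    rw [hP, Matrix.smul_mulVec, hBone, smul_smul, mul_inv_cancel₀ hone_ne, one_smul]
  -- eigenstructure
  set bb := hWherm.eigenvectorBasis with hbb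
  set lam := hWherm.eigenvalues with hlamdef
  set bv : Fin n → Fin n → ℝ := fun j k => bb j k with hbv
  have heig : ∀ j, W *ᵥ bv j = lam j • bv j := fun j => hWherm.mulVec_eigenvectorBasis j
  have hlam_le : ∀ j, |lam j| ≤ 1 := by
    intro j
    obtain ⟨i0, -, hmax⟩ := Finset.exists_max_image Finset.univ (fun i => |bv j i|)
      univ_nonempty
    have hbne : 0 < |bv j i0| := by
      rcases lt_or_eq_of_le (abs_nonneg (bv j i0)) with h | h
      · exact h
      · exfalso
        apply bb.orthonormal.ne_zero j
        have hz : bv j = 0 := by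
          funext i
          have := hmax i (Finset.mem_univ i)
          rw [← h] at this
          simpa using le_antisymm this (abs_nonneg _)
        exact WithLp.ofLp_injective (p := 2) hz
    have hb := hWcontr (bv j) _ (fun k => hmax k (Finset.mem_univ k)) i0
    rw [heig j] at hb
    have h2 : |lam j * bv j i0| ≤ |bv j i0| := hb
    rw [abs_mul] at h2
    nlinarith
  have hden : ∀ j, 0 < 1 - α * lam j := by
    intro j
    have := abs_le.mp (hlam_le j)
    nlinarith
  set μ : Fin n → ℝ := fun j => (1 - α) / (1 - α * lam j) with hμdef
  have hμpos : ∀ j, 0 < μ j := fun j => div_pos (by linarith) (hden j)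
  have hμle : ∀ j, μ j ≤ 1 := by
    intro j
    show (1 - α) / (1 - α * lam j) ≤ 1
    rw [div_le_one (hden j)]
    have := abs_le.mp (hlam_le j)
    nlinarith
  have hμeq1 : ∀ j, μ j = 1 → lam j = 1 := by
    intro j h
    have h' : (1 - α) / (1 - α * lam j) = 1 := h
    have h2 := (div_eq_one_iff_eq (ne_of_gt (hden j))).mp h'
    have h3 : α * lam j = α := by linarith
    exact mul_left_cancel₀ (ne_of_gt hα0) (by linarith)
  have hTeig : ∀ j, (1 - α • W) *ᵥ bv j = (1 - α * lam j) • bv j := by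
    intro j
    rw [Matrix.sub_mulVec, Matrix.one_mulVec, Matrix.smul_mulVec, heig j,
      smul_smul, sub_smul, one_smul]
  have hBeig : ∀ j, B *ᵥ bv j = (1 - α * lam j)⁻¹ • bv j :=
    fun j => inv_mulVec_eigen hUnitT (ne_of_gt (hden j)) (hTeig j)
  have hPeig : ∀ j, P *ᵥ bv j = μ j • bv j := by
    intro j
    rw [hP, Matrix.smul_mulVec, hBeig j, smul_smul]
    congr 1
  -- mean-zero innate opinion part
  set m0 := meanV xstar with hm0
  set y : Fin n → ℝ := fun i => xstar i - m0 with hy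
  have hysum : ∑ i, y i = 0 := by
    show ∑ i, (xstar i - m0) = 0
    rw [Finset.sum_sub_distrib, Finset.sum_const, card_univ, Fintype.card_fin]
    rw [hm0]
    simp only [meanV]
    rw [nsmul_eq_mul]
    field_simp
    ring
  set c : Fin n → ℝ := fun j => bb.repr (WithLp.toLp 2 y) j with hc
  have hcform : ∀ j, c j = ∑ k, bv j k * y k := by
    intro j
    show bb.repr (WithLp.toLp 2 y) j = _
    rw [bb.repr_apply_apply, PiLp.inner_apply]
    exact Finset.sum_congr rfl fun k _ => Real.inner_apply _ _
  have hc1 : ∀ j, lam j = 1 → c j = 0 := by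
    intro j hj
    have hv : W *ᵥ bv j = bv j := by rw [heig j, hj, one_smul]
    have hcst := perron hG hW0 hWrow hWpos hv
    set i1 := hne.some
    calc c j = ∑ k, bv j k * y k := hcform j
      _ = ∑ k, bv j i1 * y k := Finset.sum_congr rfl fun k _ => by rw [hcst k i1]
      _ = bv j i1 * ∑ k, y k := (Finset.mul_sum _ _ _).symm
      _ = 0 := by rw [hysum, mul_zero]
  have hcol : ∀ k, ∑ i, W i k = 1 := by
    intro k
    calc ∑ i, W i k = ∑ i, W k i := Finset.sum_congr rfl fun i _ => hWs i k
      _ = 1 := hWrow k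
  have hmean0 : ∀ j, lam j ≠ 1 → ∑ i, bv j i = 0 := by
    intro j hj
    have h2 : ∑ i, (W *ᵥ bv j) i = ∑ k, bv j k := by
      have hmv : ∀ i, (W *ᵥ bv j) i = ∑ k, W i k * bv j k := fun i => rfl
      simp_rw [hmv]
      rw [Finset.sum_comm]
      calc ∑ k, ∑ i, W i k * bv j k = ∑ k, (∑ i, W i k) * bv j k := by
            simp_rw [← Finset.sum_mul]
        _ = ∑ k, bv j k := by simp_rw [hcol]; simp
    rw [heig j] at h2
    have h3 : lam j * ∑ k, bv j k = ∑ k, bv j k := by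
      rw [Finset.mul_sum]
      calc ∑ k, lam j * bv j k = ∑ i, (lam j • bv j) i :=
            Finset.sum_congr rfl fun k _ => rfl
        _ = ∑ k, bv j k := h2
    have h4 : (lam j - 1) * ∑ k, bv j k = 0 := by
      have : lam j * (∑ k, bv j k) - 1 * (∑ k, bv j k) = 0 := by rw [h3]; ring
      calc (lam j - 1) * ∑ k, bv j k
          = lam j * (∑ k, bv j k) - 1 * (∑ k, bv j k) := by ring
        _ = 0 := this
    rcases mul_eq_zero.mp h4 with h | h
    · exact absurd (by linarith : lam j = 1) hj
    · exact h
  -- decompositions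
  have hxdec : xstar = m0 • e1 + y := by
    funext i
    show xstar i = m0 * 1 + (xstar i - m0)
    ring
  have hyfun : y = ∑ j, c j • bv j := by
    funext i
    rw [Finset.sum_apply]
    have h4 := congrArg (fun z : EuclideanSpace ℝ (Fin n) => z.ofLp i) (bb.sum_repr (WithLp.toLp 2 y))
    have h6 : (∑ j, bb.repr (WithLp.toLp 2 y) j • bb j) i
        = ∑ j, (bb.repr (WithLp.toLp 2 y) j • bb j) i :=
      by rw [WithLp.ofLp_sum, Finset.sum_apply]
    exact h4.symm.trans (h6.trans (Finset.sum_congr rfl fun j _ => rfl))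
  -- the target derivative function
  set F : ℝ → ℝ := fun t => ∑ j, (c j * ((1 - t) * μ j / (1 - t * μ j))) ^ 2 with hF
  -- key pointwise identity
  have hkey : ∀ β ∈ Set.Ioo (0 : ℝ) 1, varV (xPS β) = F β := by
    intro β hβ
    obtain ⟨hβ0, hβ1⟩ := hβ
    have hβ1' : (1 : ℝ) - β ≠ 0 := by linarith
    have hUnitβ := hUnit2 β ⟨hβ0, hβ1⟩
    set B2 := (1 - β • P)⁻¹ with hB2
    have hβden : ∀ j, 0 < 1 - β * μ j := by
      intro j
      nlinarith [hμpos j, hμle j]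
    have hPβeig : ∀ j, (1 - β • P) *ᵥ bv j = (1 - β * μ j) • bv j := by
      intro j
      rw [Matrix.sub_mulVec, Matrix.one_mulVec, Matrix.smul_mulVec, hPeig j,
        smul_smul, sub_smul, one_smul]
    have hB2eig : ∀ j, B2 *ᵥ bv j = (1 - β * μ j)⁻¹ • bv j :=
      fun j => inv_mulVec_eigen hUnitβ (ne_of_gt (hβden j)) (hPβeig j)
    have hM'eig : ∀ j, (B2 * P) *ᵥ bv j = (μ j / (1 - β * μ j)) • bv j := by
      intro j
      rw [← Matrix.mulVec_mulVec, hPeig j, Matrix.mulVec_smul, hB2eig j, smul_smul,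
        div_eq_mul_inv]
    have hPβone : (1 - β • P) *ᵥ e1 = (1 - β) • e1 := by
      rw [Matrix.sub_mulVec, Matrix.one_mulVec, Matrix.smul_mulVec, hPone,
        sub_smul, one_smul]
    have hB2one : B2 *ᵥ e1 = (1 - β)⁻¹ • e1 := inv_mulVec_eigen hUnitβ hβ1' hPβone
    have hM'one : (B2 * P) *ᵥ e1 = (1 - β)⁻¹ • e1 := by
      rw [← Matrix.mulVec_mulVec, hPone, hB2one]
    have hstep : ((1 - β • P)⁻¹ * P) *ᵥ xstar
        = m0 • ((1 - β)⁻¹ • e1) + ∑ j, (c j * (μ j / (1 - β * μ j))) • bv j := by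
      conv_lhs => rw [hxdec]
      rw [← hB2, Matrix.mulVec_add, Matrix.mulVec_smul, hM'one, hyfun]
      congr 1
      rw [← Matrix.mulVecLin_apply, map_sum]
      refine Finset.sum_congr rfl fun j _ => ?_
      rw [Matrix.mulVecLin_apply, Matrix.mulVec_smul, hM'eig j, smul_smul]
    have hxPSval : xPS β = fun i => m0 + ∑ j, (c j * ((1 - β) * μ j / (1 - β * μ j))) * bv j i := by
      show (1 - β) • (((1 - β • P)⁻¹ * P) *ᵥ xstar) = _
      rw [hstep]
      funext i
      simp only [Pi.smul_apply, Pi.add_apply, Finset.sum_apply, smul_eq_mul, he1]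
      rw [mul_add, Finset.mul_sum]
      congr 1
      · field_simp
      · exact Finset.sum_congr rfl fun j _ => by ring
    have hzsum : ∑ i, (∑ j, (c j * ((1 - β) * μ j / (1 - β * μ j))) * bv j i) = 0 := by
      rw [Finset.sum_comm]
      refine Finset.sum_eq_zero fun j _ => ?_
      rw [← Finset.mul_sum]
      by_cases hj : lam j = 1
      · rw [hc1 j hj]; ring
      · rw [hmean0 j hj, mul_zero]
    have hmean : meanV (xPS β) = m0 := by
      rw [hxPSval]
      simp only [meanV]
      rw [Finset.sum_add_distrib, hzsum, Finset.sum_const, card_univ, Fintype.card_fin]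
      simp only [add_zero, nsmul_eq_mul]
      field_simp
    have h5 : ∀ i, xPS β i = m0 + ∑ j, (c j * ((1 - β) * μ j / (1 - β * μ j))) * bv j i :=
      fun i => by rw [hxPSval]
    calc varV (xPS β) = ∑ i, (xPS β i - meanV (xPS β)) ^ 2 := rfl
      _ = ∑ i, (∑ j, (c j * ((1 - β) * μ j / (1 - β * μ j))) * bv j i) ^ 2 := by
          refine Finset.sum_congr rfl fun i _ => ?_
          rw [hmean, h5 i]
          ring
      _ = ∑ j, (c j * ((1 - β) * μ j / (1 - β * μ j))) ^ 2 :=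
          parseval bb bv (fun j k => rfl) _
      _ = F β := rfl
  -- derivative of F
  have hder : ∀ β ∈ Set.Ioo (0 : ℝ) 1, HasDerivAt F
      (∑ j, (c j) ^ 2 * (2 * ((1 - β) * μ j / (1 - β * μ j))
        * (μ j * (μ j - 1) / (1 - β * μ j) ^ 2))) β := by
    intro β hβ
    obtain ⟨hβ0, hβ1⟩ := hβ
    have hβden : ∀ j, 0 < 1 - β * μ j := by
      intro j
      nlinarith [hμpos j, hμle j]
    rw [hF]
    refine HasDerivAt.fun_sum fun j _ => ?_
    have h1 : HasDerivAt (fun t : ℝ => (1 - t) * μ j) (-μ j) β := by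
      simpa using ((hasDerivAt_id β).const_sub 1).mul_const (μ j)
    have h2 : HasDerivAt (fun t : ℝ => 1 - t * μ j) (-μ j) β := by
      simpa using ((hasDerivAt_id β).mul_const (μ j)).const_sub 1
    have h3 := h1.div h2 (ne_of_gt (hβden j))
    have h4 := (h3.pow 2).const_mul ((c j) ^ 2)
    have hfun : (fun t : ℝ => (c j * ((1 - t) * μ j / (1 - t * μ j))) ^ 2)
        = fun t : ℝ => (c j) ^ 2 * ((1 - t) * μ j / (1 - t * μ j)) ^ 2 :=
      funext fun t => by ring
    rw [hfun]
    refine h4.congr_deriv ?_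
    rw [show (2:ℕ) - 1 = 1 from rfl, pow_one]
    simp only [Pi.div_apply, Nat.cast_ofNat]
    ring
  -- a strictly shrinking coordinate exists
  have hy_ne : ∃ j, c j ≠ 0 := by
    by_contra h
    push_neg at h
    have hy0 : y = 0 := by
      rw [hyfun]
      refine Finset.sum_eq_zero fun j _ => ?_
      rw [h j, zero_smul]
    have hvar0 : varV xstar = 0 := by
      show ∑ i, (xstar i - meanV xstar) ^ 2 = 0
      refine Finset.sum_eq_zero fun i _ => ?_
      have h6 : xstar i - meanV xstar = y i := rfl
      rw [h6, congrFun hy0 i]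
      simp
    linarith
  obtain ⟨j0, hj0⟩ := hy_ne
  have hμj0 : μ j0 < 1 :=
    lt_of_le_of_ne (hμle j0) (fun h => hj0 (hc1 j0 (hμeq1 j0 h)))
  refine ⟨hUnit2, ?_, ?_⟩
  · intro β hβ
    have hevent : (fun b => varV (xPS b)) =ᶠ[𝓝 β] F :=
      Filter.eventuallyEq_of_mem (Ioo_mem_nhds hβ.1 hβ.2) (fun t ht => hkey t ht)
    exact hevent.differentiableAt_iff.mpr (hder β hβ).differentiableAt
  · intro β hβ
    have hevent : (fun b => varV (xPS b)) =ᶠ[𝓝 β] F :=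
      Filter.eventuallyEq_of_mem (Ioo_mem_nhds hβ.1 hβ.2) (fun t ht => hkey t ht)
    rw [hevent.deriv_eq, (hder β hβ).deriv]
    obtain ⟨hβ0, hβ1⟩ := hβ
    have hβden : ∀ j, 0 < 1 - β * μ j := by
      intro j
      nlinarith [hμpos j, hμle j]
    have hle : ∀ j ∈ Finset.univ, (c j) ^ 2 * (2 * ((1 - β) * μ j / (1 - β * μ j))
        * (μ j * (μ j - 1) / (1 - β * μ j) ^ 2)) ≤ (fun _ : Fin n => (0:ℝ)) j := by
      intro j _
      have hq : μ j * (μ j - 1) / (1 - β * μ j) ^ 2 ≤ 0 :=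
        div_nonpos_of_nonpos_of_nonneg
          (mul_nonpos_of_nonneg_of_nonpos (hμpos j).le (by linarith [hμle j]))
          (sq_nonneg _)
      have hf : 0 ≤ (1 - β) * μ j / (1 - β * μ j) :=
        div_nonneg (mul_nonneg (by linarith) (hμpos j).le) (hβden j).le
      have h6 : 2 * ((1 - β) * μ j / (1 - β * μ j))
          * (μ j * (μ j - 1) / (1 - β * μ j) ^ 2) ≤ 0 :=
        mul_nonpos_of_nonneg_of_nonpos (by linarith) hq
      exact mul_nonpos_of_nonneg_of_nonpos (sq_nonneg _) h6
    have hlt : (c j0) ^ 2 * (2 * ((1 - β) * μ j0 / (1 - β * μ j0))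
        * (μ j0 * (μ j0 - 1) / (1 - β * μ j0) ^ 2)) < (fun _ : Fin n => (0:ℝ)) j0 := by
      have hc2 : 0 < (c j0) ^ 2 := by positivity
      have hfpos : 0 < (1 - β) * μ j0 / (1 - β * μ j0) :=
        div_pos (mul_pos (by linarith) (hμpos j0)) (hβden j0)
      have hqneg : μ j0 * (μ j0 - 1) / (1 - β * μ j0) ^ 2 < 0 :=
        div_neg_of_neg_of_pos
          (mul_neg_of_pos_of_neg (hμpos j0) (by linarith))
          (pow_pos (hβden j0) 2)
      have h7 : 2 * ((1 - β) * μ j0 / (1 - β * μ j0))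
          * (μ j0 * (μ j0 - 1) / (1 - β * μ j0) ^ 2) < 0 :=
        mul_neg_of_pos_of_neg (by linarith) hqneg
      exact mul_neg_of_pos_of_neg hc2 h7
    calc (∑ j, (c j) ^ 2 * (2 * ((1 - β) * μ j / (1 - β * μ j))
          * (μ j * (μ j - 1) / (1 - β * μ j) ^ 2)))
        < ∑ _j : Fin n, (0:ℝ) := Finset.sum_lt_sum hle ⟨j0, Finset.mem_univ j0, hlt⟩
      _ = 0 := by simp
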